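/- With T as defined by T(x,y) = log x + log y + (α/θ²)log(x^θ+y^θ) - (2+α/θ)(x^θ log x + y^θ log y)/(x^θ+y^θ), and (X,Y) distributed with density f(x,y) = α(α+θ)2^{α/θ}(xy)^{θ-1}(x^θ+y^θ)^{-α/θ-2} on [1,∞)² (i.e., ε = 1), one has E[T(X,Y)] = α log 2/θ² - 1/(α+θ). -/

import Mathlib

open MeasureTheory Set Filter Topology

namespace Stmt13
lemma log_mul_rpow_tendsto {c : ℝ} (hc : 0 < c) :
    Tendsto (fun t : ℝ => Real.log t * t ^ (-c)) atTop (𝓝 0) := by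
  have h := (isLittleO_log_rpow_atTop hc).tendsto_div_nhds_zero
  refine h.congr' ?_
  filter_upwards [eventually_gt_atTop (0:ℝ)] with t ht
  rw [Real.rpow_neg ht.le, div_eq_mul_inv]

lemma hasDerivAt_base (θ a : ℝ) {y : ℝ} (hy : 0 < y) :
    HasDerivAt (fun y : ℝ => a + y ^ θ) (θ * y ^ (θ - 1)) y :=
  (Real.hasDerivAt_rpow_const (p := θ) (Or.inl hy.ne')).const_add a

lemma base_tendsto (a : ℝ) {θ : ℝ} (hθ : 0 < θ) :
    Tendsto (fun y : ℝ => a + y ^ θ) atTop atTop :=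
  tendsto_atTop_add_const_left _ a (tendsto_rpow_atTop hθ)

lemma rpow_comp_tendsto (a : ℝ) {θ c : ℝ} (hθ : 0 < θ) (hc : 0 < c) :
    Tendsto (fun y : ℝ => (a + y ^ θ) ^ (-c)) atTop (𝓝 0) :=
  (tendsto_rpow_neg_atTop hc).comp (base_tendsto a hθ)

lemma log_rpow_comp_tendsto (a : ℝ) {θ c : ℝ} (hθ : 0 < θ) (hc : 0 < c) :
    Tendsto (fun y : ℝ => Real.log (a + y ^ θ) * (a + y ^ θ) ^ (-c)) atTop (𝓝 0) :=
  (log_mul_rpow_tendsto hc).comp (base_tendsto a hθ)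

lemma integrable_dom2 {θ a c : ℝ} (hθ : 0 < θ) (ha : 0 < a) (hc : 0 < c) :
    IntegrableOn (fun y : ℝ => y^(θ-1) * (a+y^θ)^(-c-1)) (Ioi 1) := by
  have hd : ∀ y ∈ Ioi (1:ℝ), HasDerivAt (fun y : ℝ => (-(1/(θ*c))) * (a+y^θ)^(-c))
      (y^(θ-1) * (a+y^θ)^(-c-1)) y := by
    intro y hy
    have hy0 : (0:ℝ) < y := lt_trans one_pos hy
    have hp : (0:ℝ) < a + y^θ := by positivity
    have h := ((hasDerivAt_base θ a hy0).rpow_const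
      (p := -c) (Or.inl hp.ne')).const_mul (-(1/(θ*c)))
    refine h.congr_deriv ?_
    field_simp
  have hcont : ContinuousWithinAt (fun y : ℝ => (-(1/(θ*c))) * (a+y^θ)^(-c)) (Ici 1) 1 := by
    have hp : (0:ℝ) < a + (1:ℝ)^θ := by positivity
    exact (((hasDerivAt_base θ a one_pos).rpow_const
      (p := -c) (Or.inl hp.ne')).const_mul (-(1/(θ*c)))).continuousAt.continuousWithinAt
  refine integrableOn_Ioi_deriv_of_nonneg (l := 0) hcont hd ?_ ?_
  · intro y hy
    have hy0 : (0:ℝ) < y := lt_trans one_pos hy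
    have hp : (0:ℝ) < a + y^θ := by positivity
    positivity
  · simpa using (rpow_comp_tendsto a hθ hc).const_mul (-(1/(θ*c)))

lemma hasDerivAt_logpow {θ a c : ℝ} (hθ : 0 < θ) (ha : 0 < a) (hc : 0 < c)
    {y : ℝ} (hy : 0 < y) :
    HasDerivAt (fun y : ℝ => (-(1/(θ*c))) * (Real.log (a+y^θ) * (a+y^θ)^(-c))
        - (1/(θ*c^2)) * (a+y^θ)^(-c))
      (y^(θ-1) * (Real.log (a+y^θ) * (a+y^θ)^(-c-1))) y := by
  have hp : (0:ℝ) < a + y^θ := by positivity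
  have hP := hasDerivAt_base θ a hy
  have h := ((((hP.log hp.ne').mul (hP.rpow_const (p := -c) (Or.inl hp.ne'))).const_mul
      (-(1/(θ*c)))).sub ((hP.rpow_const (p := -c) (Or.inl hp.ne')).const_mul (1/(θ*c^2))))
  refine h.congr_deriv ?_
  have F1 : (a+y^θ)^(-c) = (a+y^θ)^(-c-1) * (a+y^θ) := by
    rw [show -c = (-c-1)+1 by ring, Real.rpow_add_one hp.ne']
    rw [show (-c-1)+1-1 = -c-1 by ring]
  rw [F1]
  field_simp
  ring

lemma integrable_dom1 {θ a c : ℝ} (hθ : 0 < θ) (ha : 1 ≤ a) (hc : 0 < c) :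
    IntegrableOn (fun y : ℝ => y^(θ-1) * (Real.log (a+y^θ) * (a+y^θ)^(-c-1))) (Ioi 1) := by
  have ha0 : (0:ℝ) < a := lt_of_lt_of_le one_pos ha
  refine integrableOn_Ioi_deriv_of_nonneg (l := 0)
    (hasDerivAt_logpow hθ ha0 hc one_pos).continuousAt.continuousWithinAt
    (fun y hy => hasDerivAt_logpow hθ ha0 hc (lt_trans one_pos hy)) ?_ ?_
  · intro y hy
    have hy0 : (0:ℝ) < y := lt_trans one_pos hy
    have hp : (1:ℝ) ≤ a + y^θ := le_add_of_le_of_nonneg ha (Real.rpow_nonneg hy0.le θ)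
    have hl : 0 ≤ Real.log (a+y^θ) := Real.log_nonneg hp
    positivity
  · have t1 := (log_rpow_comp_tendsto a hθ hc).const_mul (-(1/(θ*c)))
    have t2 := (rpow_comp_tendsto a hθ hc).const_mul (1/(θ*c^2))
    simpa using t1.sub t2

lemma hasDerivAt_Gin (α θ : ℝ) (hα : 0 < α) (hθ : 0 < θ) {x : ℝ} (hx : 0 < x) {y : ℝ} (hy : 0 < y) :
    HasDerivAt (fun y : ℝ =>
      (α*(α+θ)*2^(α/θ) * x^(θ-1)/θ^2) *
        ((x^θ+y^θ)^(-(α/θ)-1) *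
            ((-θ*Real.log x/(α/θ+1) + 1/(α/θ+1) - (α/θ)/(α/θ+1)^2)
              - (α/θ)/(α/θ+1) * Real.log (x^θ+y^θ))
          + θ * ((x^θ*Real.log x + y^θ*Real.log y) * (x^θ+y^θ)^(-(α/θ)-2))))
      ((Real.log x + Real.log y + (α/θ^2) * Real.log (x^θ+y^θ) -
        (2+α/θ) * ((x^θ*Real.log x + y^θ*Real.log y)/(x^θ+y^θ))) *
       (α*(α+θ)*2^(α/θ) * (x*y)^(θ-1) * (x^θ+y^θ)^(-α/θ-2))) y := by
  have hyne := hy.ne'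
  have hX : (0:ℝ) < x ^ θ := Real.rpow_pos_of_pos hx θ
  have hY : (0:ℝ) < y ^ θ := Real.rpow_pos_of_pos hy θ
  have hp : (0:ℝ) < x ^ θ + y ^ θ := by linarith
  have hb1 : α/θ + 1 ≠ 0 := by positivity
  have hP : HasDerivAt (fun y : ℝ => x^θ + y^θ) (θ * y^(θ-1)) y := hasDerivAt_base θ _ hy
  have h1 : HasDerivAt (fun y : ℝ => (x^θ+y^θ)^(-(α/θ)-1))
      (θ*y^(θ-1) * (-(α/θ)-1) * (x^θ+y^θ)^(-(α/θ)-1-1)) y := hP.rpow_const (Or.inl hp.ne')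
  have h2 : HasDerivAt (fun y : ℝ => Real.log (x^θ+y^θ)) ((θ*y^(θ-1))/(x^θ+y^θ)) y := hP.log hp.ne'
  have h3 : HasDerivAt (fun y : ℝ => (x^θ+y^θ)^(-(α/θ)-2))
      (θ*y^(θ-1) * (-(α/θ)-2) * (x^θ+y^θ)^(-(α/θ)-2-1)) y := hP.rpow_const (Or.inl hp.ne')
  have h4 : HasDerivAt (fun y : ℝ => y^θ * Real.log y)
      (θ*y^(θ-1) * Real.log y + y^θ * y⁻¹) y :=
    (Real.hasDerivAt_rpow_const (Or.inl hyne)).mul (Real.hasDerivAt_log hyne)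
  have hsum := ((h1.mul ((h2.const_mul ((α/θ)/(α/θ+1))).const_sub
      (-θ*Real.log x/(α/θ+1) + 1/(α/θ+1) - (α/θ)/(α/θ+1)^2))).add
    (((h4.const_add (x^θ*Real.log x)).mul h3).const_mul θ)).const_mul
      (α*(α+θ)*2^(α/θ) * x^(θ-1)/θ^2)
  refine hsum.congr_deriv ?_
  have E0 : (x^θ+y^θ)^(-α/θ-2) = (x^θ+y^θ)^(-(α/θ)-2) := by rw [neg_div]
  have E1 : (x^θ+y^θ)^(-(α/θ)-1) = (x^θ+y^θ)^(-(α/θ)-2) * (x^θ+y^θ) := by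
    rw [show -(α/θ)-1 = (-(α/θ)-2)+1 by ring, Real.rpow_add_one hp.ne']
  have E2 : (x^θ+y^θ)^(-(α/θ)-1-1) = (x^θ+y^θ)^(-(α/θ)-2) := by
    congr 1; ring
  have E3 : (x^θ+y^θ)^(-(α/θ)-2-1) = (x^θ+y^θ)^(-(α/θ)-2) / (x^θ+y^θ) := by
    rw [Real.rpow_sub hp, Real.rpow_one]
  have E4 : y^(θ-1) = y^θ/y := by rw [Real.rpow_sub hy, Real.rpow_one]
  have E5 : x^(θ-1) = x^θ/x := by rw [Real.rpow_sub hx, Real.rpow_one]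
  have E6 : (x*y)^(θ-1) = x^(θ-1)*y^(θ-1) := Real.mul_rpow hx.le hy.le
  rw [E0, E6, E2, E3, E1, E4, E5]
  field_simp
  ring

lemma tendsto_Gin (α θ : ℝ) (hα : 0 < α) (hθ : 0 < θ) (x : ℝ) (hx : 0 < x) :
    Tendsto (fun y : ℝ =>
      (α*(α+θ)*2^(α/θ) * x^(θ-1)/θ^2) *
        ((x^θ+y^θ)^(-(α/θ)-1) *
            ((-θ*Real.log x/(α/θ+1) + 1/(α/θ+1) - (α/θ)/(α/θ+1)^2)
              - (α/θ)/(α/θ+1) * Real.log (x^θ+y^θ))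
          + θ * ((x^θ*Real.log x + y^θ*Real.log y) * (x^θ+y^θ)^(-(α/θ)-2))))
      atTop (𝓝 0) := by
  have hX : (0:ℝ) < x ^ θ := Real.rpow_pos_of_pos hx θ
  have hc1 : (0:ℝ) < α/θ+1 := by positivity
  have hc2 : (0:ℝ) < α/θ+2 := by positivity
  have t1 : Tendsto (fun y : ℝ => (x^θ+y^θ)^(-(α/θ)-1)) atTop (𝓝 0) :=
    (rpow_comp_tendsto (x^θ) hθ hc1).congr (fun y => by rw [show -(α/θ+1) = -(α/θ)-1 by ring])
  have t2 : Tendsto (fun y : ℝ => Real.log (x^θ+y^θ) * (x^θ+y^θ)^(-(α/θ)-1)) atTop (𝓝 0) :=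
    (log_rpow_comp_tendsto (x^θ) hθ hc1).congr
      (fun y => by rw [show -(α/θ+1) = -(α/θ)-1 by ring])
  have t3 : Tendsto (fun y : ℝ => (x^θ+y^θ)^(-(α/θ)-2)) atTop (𝓝 0) :=
    (rpow_comp_tendsto (x^θ) hθ hc2).congr (fun y => by rw [show -(α/θ+2) = -(α/θ)-2 by ring])
  have t4 : Tendsto (fun y : ℝ => (y^θ*Real.log y) * (x^θ+y^θ)^(-(α/θ)-2)) atTop (𝓝 0) := by
    refine squeeze_zero' ?_ ?_ (by simpa using t2.const_mul (1/θ))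
    · filter_upwards [eventually_ge_atTop (1:ℝ)] with y hy
      have hy0 : (0:ℝ) < y := lt_of_lt_of_le one_pos hy
      have := Real.log_nonneg hy
      positivity
    · filter_upwards [eventually_ge_atTop (1:ℝ)] with y hy
      have hy0 : (0:ℝ) < y := lt_of_lt_of_le one_pos hy
      have hY : (0:ℝ) < y ^ θ := Real.rpow_pos_of_pos hy0 θ
      have hp : (0:ℝ) < x^θ + y^θ := by linarith
      have hPw : (0:ℝ) ≤ (x^θ+y^θ)^(-(α/θ)-2) := Real.rpow_nonneg hp.le _
      have hyθ : y^θ ≤ x^θ+y^θ := le_add_of_nonneg_left hX.le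
      have hlog : Real.log y ≤ Real.log (x^θ+y^θ) / θ := by
        rw [le_div_iff₀ hθ]
        have : Real.log (y^θ) ≤ Real.log (x^θ+y^θ) := (Real.log_le_log_iff hY hp).mpr hyθ
        rwa [Real.log_rpow hy0, mul_comm] at this
      have h1 : y^θ * Real.log y ≤ (x^θ+y^θ) * (Real.log (x^θ+y^θ) / θ) :=
        mul_le_mul hyθ hlog (Real.log_nonneg hy) hp.le
      have h2 := mul_le_mul_of_nonneg_right h1 hPw
      refine h2.trans (le_of_eq ?_)
      have E1 : (x^θ+y^θ)^(-(α/θ)-1) = (x^θ+y^θ)^(-(α/θ)-2) * (x^θ+y^θ) := by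
        rw [show -(α/θ)-1 = (-(α/θ)-2)+1 by ring, Real.rpow_add_one hp.ne']
      rw [E1]; ring
  have tall := (((t1.const_mul (-θ*Real.log x/(α/θ+1) + 1/(α/θ+1) - (α/θ)/(α/θ+1)^2)).sub
      (t2.const_mul ((α/θ)/(α/θ+1)))).add
      (((t3.const_mul (x^θ*Real.log x)).add t4).const_mul θ)).const_mul
      (α*(α+θ)*2^(α/θ) * x^(θ-1)/θ^2)
  have tall0 : Tendsto (fun k : ℝ =>
      α * (α + θ) * 2 ^ (α / θ) * x ^ (θ - 1) / θ ^ 2 *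
        ((-θ * Real.log x / (α / θ + 1) + 1 / (α / θ + 1) - α / θ / (α / θ + 1) ^ 2) *
              (x ^ θ + k ^ θ) ^ (-(α / θ) - 1) -
            α / θ / (α / θ + 1) * (Real.log (x ^ θ + k ^ θ) * (x ^ θ + k ^ θ) ^ (-(α / θ) - 1)) +
          θ *
            (x ^ θ * Real.log x * (x ^ θ + k ^ θ) ^ (-(α / θ) - 2) +
              k ^ θ * Real.log k * (x ^ θ + k ^ θ) ^ (-(α / θ) - 2))))
      atTop (𝓝 0) := by
    convert tall using 2
    ring
  exact tall0.congr fun y => by ring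

lemma meas_aux (α θ x : ℝ) (hx0 : 0 < x) :
    AEStronglyMeasurable (fun y : ℝ =>
      ((Real.log x + Real.log y + (α/θ^2) * Real.log (x^θ+y^θ) -
        (2+α/θ) * ((x^θ*Real.log x + y^θ*Real.log y)/(x^θ+y^θ))) *
       (α*(α+θ)*2^(α/θ) * (x*y)^(θ-1) * (x^θ+y^θ)^(-α/θ-2))))
      (volume.restrict (Ioi 1)) := by
  have hX : (0:ℝ) < x ^ θ := Real.rpow_pos_of_pos hx0 θ
  refine ContinuousOn.aestronglyMeasurable ?_ measurableSet_Ioi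
  intro y hy
  have hy0 : (0:ℝ) < y := lt_trans one_pos hy
  have hY : (0:ℝ) < y ^ θ := Real.rpow_pos_of_pos hy0 θ
  have hp : (0:ℝ) < x^θ + y^θ := by linarith
  have cY : ContinuousAt (fun y : ℝ => y ^ θ) y :=
    Real.continuousAt_rpow_const y θ (Or.inl hy0.ne')
  have cP : ContinuousAt (fun y : ℝ => x^θ + y^θ) y := continuousAt_const.add cY
  have clogy : ContinuousAt Real.log y := Real.continuousAt_log hy0.ne'
  have clogp : ContinuousAt (fun y : ℝ => Real.log (x^θ+y^θ)) y :=
    cP.log hp.ne'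
  have cpow : ContinuousAt (fun y : ℝ => (x^θ+y^θ)^(-α/θ-2)) y :=
    cP.rpow_const (Or.inl hp.ne')
  have cxy : ContinuousAt (fun y : ℝ => (x*y)^(θ-1)) y := by
    have : ContinuousAt (fun y : ℝ => x*y) y := continuousAt_const.mul continuousAt_id
    exact this.rpow_const (Or.inl (by positivity))
  have cylog : ContinuousAt (fun y : ℝ => y^θ * Real.log y) y := cY.mul clogy
  exact ContinuousAt.continuousWithinAt
    (((continuousAt_const.add clogy).add (continuousAt_const.mul clogp)).sub
      (continuousAt_const.mul ((continuousAt_const.add cylog).div cP hp.ne'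
        ))|>.mul ((continuousAt_const.mul cxy).mul cpow))

lemma inner_integrable (α θ : ℝ) (hα : 0 < α) (hθ : 0 < θ) {x : ℝ} (hx : 1 ≤ x) :
    IntegrableOn (fun y : ℝ =>
      ((Real.log x + Real.log y + (α/θ^2) * Real.log (x^θ+y^θ) -
        (2+α/θ) * ((x^θ*Real.log x + y^θ*Real.log y)/(x^θ+y^θ))) *
       (α*(α+θ)*2^(α/θ) * (x*y)^(θ-1) * (x^θ+y^θ)^(-α/θ-2)))) (Ioi 1) := by
  have hx0 : (0:ℝ) < x := lt_of_lt_of_le one_pos hx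
  have hX1 : (1:ℝ) ≤ x ^ θ := by
    have := Real.rpow_le_rpow zero_le_one hx hθ.le
    rwa [Real.one_rpow] at this
  have hc : (0:ℝ) < α/θ+1 := by positivity
  have hdom := (integrable_dom1 (a := x^θ) (c := α/θ+1) hθ hX1 hc).const_mul
    ((2/θ + α/θ^2 + (2+α/θ)/θ) * (α*(α+θ)*2^(α/θ) * x^(θ-1)))
  refine Integrable.mono' hdom (meas_aux α θ x hx0) ?_
  refine (ae_restrict_iff' measurableSet_Ioi).mpr (Filter.Eventually.of_forall fun y hy => ?_)
  have hy0 : (0:ℝ) < y := lt_trans one_pos hy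
  have hy1 : (1:ℝ) ≤ y := le_of_lt hy
  have hX : (0:ℝ) < x ^ θ := Real.rpow_pos_of_pos hx0 θ
  have hY : (0:ℝ) < y ^ θ := Real.rpow_pos_of_pos hy0 θ
  have hp : (0:ℝ) < x^θ + y^θ := by linarith
  have hp1 : (1:ℝ) ≤ x^θ + y^θ := by linarith
  have hL : (0:ℝ) ≤ Real.log (x^θ+y^θ) := Real.log_nonneg hp1
  have hlx : (0:ℝ) ≤ Real.log x := Real.log_nonneg hx
  have hly : (0:ℝ) ≤ Real.log y := Real.log_nonneg hy1
  set L := Real.log (x^θ+y^θ) with hLdef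
  have hlxL : Real.log x ≤ L / θ := by
    rw [le_div_iff₀ hθ]
    have : Real.log (x^θ) ≤ L := (Real.log_le_log_iff hX hp).mpr (by linarith)
    rwa [Real.log_rpow hx0, mul_comm] at this
  have hlyL : Real.log y ≤ L / θ := by
    rw [le_div_iff₀ hθ]
    have : Real.log (y^θ) ≤ L := (Real.log_le_log_iff hY hp).mpr (by linarith)
    rwa [Real.log_rpow hy0, mul_comm] at this
  have hfnn : (0:ℝ) ≤ α*(α+θ)*2^(α/θ) * (x*y)^(θ-1) * (x^θ+y^θ)^(-α/θ-2) := by positivity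
  have hSnn : (0:ℝ) ≤ x^θ*Real.log x + y^θ*Real.log y := by positivity
  have hSp : (x^θ*Real.log x + y^θ*Real.log y)/(x^θ+y^θ) ≤ L/θ := by
    rw [div_le_div_iff₀ hp (by positivity : (0:ℝ) < θ)]
    have b1 : x^θ*Real.log x ≤ x^θ * (L/θ) := by
      exact mul_le_mul_of_nonneg_left hlxL hX.le
    have b2 : y^θ*Real.log y ≤ y^θ * (L/θ) := by
      exact mul_le_mul_of_nonneg_left hlyL hY.le
    have : (x^θ*Real.log x + y^θ*Real.log y) ≤ (x^θ + y^θ) * (L/θ) := by linarith [b1, b2]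
    calc (x^θ*Real.log x + y^θ*Real.log y) * θ ≤ ((x^θ + y^θ) * (L/θ)) * θ :=
          mul_le_mul_of_nonneg_right this hθ.le
      _ = L * (x^θ+y^θ) := by field_simp
  have hSpnn : (0:ℝ) ≤ (x^θ*Real.log x + y^θ*Real.log y)/(x^θ+y^θ) := by positivity
  have h1 : (2+α/θ) * ((x^θ*Real.log x + y^θ*Real.log y)/(x^θ+y^θ)) ≤ (2+α/θ)*(L/θ) :=
    mul_le_mul_of_nonneg_left hSp (by positivity)
  have h1' : (0:ℝ) ≤ (2+α/θ) * ((x^θ*Real.log x + y^θ*Real.log y)/(x^θ+y^θ)) :=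
    mul_nonneg (by positivity) hSpnn
  have h2 : (0:ℝ) ≤ (α/θ^2) * L := by positivity
  have heq : (2+α/θ)*(L/θ) = ((2+α/θ)/θ)*L := by ring
  have heq2 : (2/θ)*L = L/θ + L/θ := by ring
  have hTb : |Real.log x + Real.log y + (α/θ^2) * L -
      (2+α/θ) * ((x^θ*Real.log x + y^θ*Real.log y)/(x^θ+y^θ))|
      ≤ (2/θ + α/θ^2 + (2+α/θ)/θ) * L := by
    have hK : (2/θ + α/θ^2 + (2+α/θ)/θ) * L = (2/θ)*L + (α/θ^2)*L + ((2+α/θ)/θ)*L := by ring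
    rw [abs_le]
    constructor
    · rw [hK]; linarith
    · rw [hK]; linarith
  calc ‖(Real.log x + Real.log y + (α/θ^2) * Real.log (x^θ+y^θ) -
        (2+α/θ) * ((x^θ*Real.log x + y^θ*Real.log y)/(x^θ+y^θ))) *
       (α*(α+θ)*2^(α/θ) * (x*y)^(θ-1) * (x^θ+y^θ)^(-α/θ-2))‖
      = |Real.log x + Real.log y + (α/θ^2) * L -
        (2+α/θ) * ((x^θ*Real.log x + y^θ*Real.log y)/(x^θ+y^θ))| *
        (α*(α+θ)*2^(α/θ) * (x*y)^(θ-1) * (x^θ+y^θ)^(-α/θ-2)) := by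
        rw [Real.norm_eq_abs, abs_mul, abs_of_nonneg hfnn]
    _ ≤ ((2/θ + α/θ^2 + (2+α/θ)/θ) * L) *
        (α*(α+θ)*2^(α/θ) * (x*y)^(θ-1) * (x^θ+y^θ)^(-α/θ-2)) :=
        mul_le_mul_of_nonneg_right hTb hfnn
    _ = (2/θ + α/θ^2 + (2+α/θ)/θ) * (α*(α+θ)*2^(α/θ) * x^(θ-1)) *
        (y^(θ-1) * (Real.log (x^θ+y^θ) * (x^θ+y^θ)^(-(α/θ+1)-1))) := by
        rw [Real.mul_rpow hx0.le hy0.le, show (-α/θ-2 : ℝ) = -(α/θ+1)-1 by ring]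
        ring

lemma hasDerivAt_Gout (α θ : ℝ) (hα : 0 < α) (hθ : 0 < θ) {x : ℝ} (hx : 0 < x) :
    HasDerivAt (fun x : ℝ =>
      (α*(α+θ)*2^(α/θ)/θ^3) *
        ((θ/(α/θ+1)) * ((Real.log x * x^θ) * (x^θ+1)^(-(α/θ)-1))
          - (1/(α/θ+1)) * (Real.log (x^θ+1) * (x^θ+1)^(-(α/θ)))
          + (1/((α/θ)*(α/θ+1)^2)) * (x^θ+1)^(-(α/θ))))
      (-( (α*(α+θ)*2^(α/θ) * x^(θ-1)/θ^2) *
        ((x^θ+1)^(-(α/θ)-1) *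
            ((-θ*Real.log x/(α/θ+1) + 1/(α/θ+1) - (α/θ)/(α/θ+1)^2)
              - (α/θ)/(α/θ+1) * Real.log (x^θ+1))
          + θ * (x^θ*Real.log x * (x^θ+1)^(-(α/θ)-2))))) x := by
  have hb : (0:ℝ) < α/θ := by positivity
  have hb1 : (0:ℝ) < α/θ+1 := by positivity
  have hX : (0:ℝ) < x ^ θ := Real.rpow_pos_of_pos hx θ
  have hQ : (0:ℝ) < x^θ + 1 := by linarith
  have hQd : HasDerivAt (fun x : ℝ => x^θ + 1) (θ*x^(θ-1)) x :=
    (Real.hasDerivAt_rpow_const (p := θ) (Or.inl hx.ne')).add_const 1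
  have q1 : HasDerivAt (fun x : ℝ => (x^θ+1)^(-(α/θ)-1))
      (θ*x^(θ-1) * (-(α/θ)-1) * (x^θ+1)^(-(α/θ)-1-1)) x := hQd.rpow_const (Or.inl hQ.ne')
  have q2 : HasDerivAt (fun x : ℝ => Real.log x * x^θ)
      (x⁻¹ * x^θ + Real.log x * (θ*x^(θ-1))) x :=
    (Real.hasDerivAt_log hx.ne').mul (Real.hasDerivAt_rpow_const (Or.inl hx.ne'))
  have q3 : HasDerivAt (fun x : ℝ => Real.log (x^θ+1)) (θ*x^(θ-1)/(x^θ+1)) x :=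
    hQd.log hQ.ne'
  have q4 : HasDerivAt (fun x : ℝ => (x^θ+1)^(-(α/θ)))
      (θ*x^(θ-1) * (-(α/θ)) * (x^θ+1)^(-(α/θ)-1)) x := hQd.rpow_const (Or.inl hQ.ne')
  have h := ((((q2.mul q1).const_mul (θ/(α/θ+1))).sub
      ((q3.mul q4).const_mul (1/(α/θ+1)))).add
      (q4.const_mul (1/((α/θ)*(α/θ+1)^2)))).const_mul (α*(α+θ)*2^(α/θ)/θ^3)
  refine h.congr_deriv ?_
  have E2 : (x^θ+1)^(-(α/θ)-1-1) = (x^θ+1)^(-(α/θ)-2) := by congr 1; ring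
  have E1 : (x^θ+1)^(-(α/θ)-1) = (x^θ+1)^(-(α/θ)-2) * (x^θ+1) := by
    rw [show -(α/θ)-1 = (-(α/θ)-2)+1 by ring, Real.rpow_add_one hQ.ne']
  have E0 : (x^θ+1)^(-(α/θ)) = ((x^θ+1)^(-(α/θ)-2) * (x^θ+1)) * (x^θ+1) := by
    rw [← Real.rpow_add_one hQ.ne', ← Real.rpow_add_one hQ.ne']
    congr 1; ring
  have E5 : x^(θ-1) = x^θ/x := by rw [Real.rpow_sub hx, Real.rpow_one]
  rw [E2, E0, E1, E5]
  field_simp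
  ring

lemma baseQ_tendsto {θ : ℝ} (hθ : 0 < θ) :
    Tendsto (fun x : ℝ => x ^ θ + 1) atTop atTop :=
  tendsto_atTop_add_const_right _ 1 (tendsto_rpow_atTop hθ)

lemma tendsto_Gout (α θ : ℝ) (hα : 0 < α) (hθ : 0 < θ) :
    Tendsto (fun x : ℝ =>
      (α*(α+θ)*2^(α/θ)/θ^3) *
        ((θ/(α/θ+1)) * ((Real.log x * x^θ) * (x^θ+1)^(-(α/θ)-1))
          - (1/(α/θ+1)) * (Real.log (x^θ+1) * (x^θ+1)^(-(α/θ)))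
          + (1/((α/θ)*(α/θ+1)^2)) * (x^θ+1)^(-(α/θ)))) atTop (𝓝 0) := by
  have hb : (0:ℝ) < α/θ := by positivity
  have u2 : Tendsto (fun x : ℝ => Real.log (x^θ+1) * (x^θ+1)^(-(α/θ))) atTop (𝓝 0) :=
    (log_mul_rpow_tendsto hb).comp (baseQ_tendsto hθ)
  have u3 : Tendsto (fun x : ℝ => (x^θ+1)^(-(α/θ))) atTop (𝓝 0) :=
    (tendsto_rpow_neg_atTop hb).comp (baseQ_tendsto hθ)
  have u1 : Tendsto (fun x : ℝ => Real.log x * x^θ * (x^θ+1)^(-(α/θ)-1)) atTop (𝓝 0) := by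
    refine squeeze_zero' ?_ ?_ (by simpa using u2.const_mul (1/θ))
    · filter_upwards [eventually_ge_atTop (1:ℝ)] with x hx1
      have hx0 : (0:ℝ) < x := lt_of_lt_of_le one_pos hx1
      have := Real.log_nonneg hx1
      have hQ : (0:ℝ) < x^θ+1 := by positivity
      positivity
    · filter_upwards [eventually_ge_atTop (1:ℝ)] with x hx1
      have hx0 : (0:ℝ) < x := lt_of_lt_of_le one_pos hx1
      have hX : (0:ℝ) < x^θ := Real.rpow_pos_of_pos hx0 θ
      have hQ : (0:ℝ) < x^θ+1 := by linarith
      have hPw : (0:ℝ) ≤ (x^θ+1)^(-(α/θ)-1) := Real.rpow_nonneg hQ.le _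
      have hxQ : x^θ ≤ x^θ+1 := by linarith
      have hlog : Real.log x ≤ Real.log (x^θ+1) / θ := by
        rw [le_div_iff₀ hθ]
        have : Real.log (x^θ) ≤ Real.log (x^θ+1) := (Real.log_le_log_iff hX hQ).mpr hxQ
        rwa [Real.log_rpow hx0, mul_comm] at this
      have hLQ : (0:ℝ) ≤ Real.log (x^θ+1) := Real.log_nonneg (by linarith)
      have h1 : Real.log x * x^θ ≤ (Real.log (x^θ+1)/θ) * (x^θ+1) :=
        mul_le_mul hlog hxQ hX.le (by positivity)
      have h2 := mul_le_mul_of_nonneg_right h1 hPw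
      refine h2.trans (le_of_eq ?_)
      have E1 : (x^θ+1)^(-(α/θ)) = (x^θ+1)^(-(α/θ)-1) * (x^θ+1) := by
        rw [← Real.rpow_add_one hQ.ne']; congr 1; ring
      rw [E1]; ring
  have tall := (((u1.const_mul (θ/(α/θ+1))).sub (u2.const_mul (1/(α/θ+1)))).add
      (u3.const_mul (1/((α/θ)*(α/θ+1)^2)))).const_mul (α*(α+θ)*2^(α/θ)/θ^3)
  have tall0 : Tendsto (fun x : ℝ =>
      (α*(α+θ)*2^(α/θ)/θ^3) *
        ((θ/(α/θ+1)) * (Real.log x * x^θ * (x^θ+1)^(-(α/θ)-1))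
          - (1/(α/θ+1)) * (Real.log (x^θ+1) * (x^θ+1)^(-(α/θ)))
          + (1/((α/θ)*(α/θ+1)^2)) * (x^θ+1)^(-(α/θ)))) atTop (𝓝 0) := by
    convert tall using 2; ring
  exact tall0.congr fun x => by ring

lemma absbr {A B C θ Lx Lq P N : ℝ}
    (f2 : θ*N ≤ Lq*P) (hLqP : 0 ≤ Lq*P) (hθN : 0 ≤ θ*N)
    (g1 : A*(θ*Lx*P) ≤ A*(Lq*P)) (h0 : 0 ≤ A*(θ*Lx*P))
    (hM1 : 0 ≤ B*(Lq*P)) (hP1 : 0 ≤ A*P) (hP2 : 0 ≤ C*P) :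
    |P * ((-θ*Lx*A + A - C) - B*Lq) + θ*N| ≤ (A+B+1)*(Lq*P) + (A+C)*P := by
  rw [abs_le]
  exact ⟨by linarith, by linarith⟩

lemma outer_integrable (α θ : ℝ) (hα : 0 < α) (hθ : 0 < θ) :
    IntegrableOn (fun x : ℝ =>
      -( (α*(α+θ)*2^(α/θ) * x^(θ-1)/θ^2) *
        ((x^θ+1)^(-(α/θ)-1) *
            ((-θ*Real.log x/(α/θ+1) + 1/(α/θ+1) - (α/θ)/(α/θ+1)^2)
              - (α/θ)/(α/θ+1) * Real.log (x^θ+1))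
          + θ * (x^θ*Real.log x * (x^θ+1)^(-(α/θ)-2))))) (Ioi 1) := by
  have hb : (0:ℝ) < α/θ := by positivity
  have hb1 : (0:ℝ) < α/θ+1 := by positivity
  have hdom := (((integrable_dom1 (a := 1) (c := α/θ) hθ le_rfl hb).const_mul
      (1/(α/θ+1) + (α/θ)/(α/θ+1) + 1)).add
    ((integrable_dom2 (a := 1) (c := α/θ) hθ one_pos hb).const_mul
      (1/(α/θ+1) + (α/θ)/(α/θ+1)^2))).const_mul (α*(α+θ)*2^(α/θ)/θ^2)
  refine Integrable.mono' hdom ?_ ?_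
  · -- measurability
    refine ContinuousOn.aestronglyMeasurable ?_ measurableSet_Ioi
    intro x hx
    have hx0 : (0:ℝ) < x := lt_trans one_pos hx
    have hX : (0:ℝ) < x^θ := Real.rpow_pos_of_pos hx0 θ
    have hQ : (0:ℝ) < x^θ+1 := by linarith
    have cX : ContinuousAt (fun x : ℝ => x ^ θ) x :=
      Real.continuousAt_rpow_const x θ (Or.inl hx0.ne')
    have cQ : ContinuousAt (fun x : ℝ => x^θ + 1) x := cX.add continuousAt_const
    have clogx : ContinuousAt Real.log x := Real.continuousAt_log hx0.ne'
    have clogQ : ContinuousAt (fun x : ℝ => Real.log (x^θ+1)) x := cQ.log hQ.ne'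
    have cP1 : ContinuousAt (fun x : ℝ => (x^θ+1)^(-(α/θ)-1)) x := cQ.rpow_const (Or.inl hQ.ne')
    have cP2 : ContinuousAt (fun x : ℝ => (x^θ+1)^(-(α/θ)-2)) x := cQ.rpow_const (Or.inl hQ.ne')
    have cXm1 : ContinuousAt (fun x : ℝ => x^(θ-1)) x :=
      Real.continuousAt_rpow_const x (θ-1) (Or.inl hx0.ne')
    exact (ContinuousAt.continuousWithinAt (by
      exact (((continuousAt_const.mul cXm1).div_const _).mul
        ((cP1.mul (((((clogx.const_mul (-θ)).div_const _).add continuousAt_const).sub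
          continuousAt_const).sub (clogQ.const_mul _))).add
          ((cX.mul clogx |>.mul cP2).const_mul θ))).neg))
  · refine (ae_restrict_iff' measurableSet_Ioi).mpr (Filter.Eventually.of_forall fun x hx => ?_)
    have hx1 : (1:ℝ) ≤ x := le_of_lt hx
    have hx0 : (0:ℝ) < x := lt_trans one_pos hx
    have hX : (0:ℝ) < x^θ := Real.rpow_pos_of_pos hx0 θ
    have hQ : (0:ℝ) < x^θ+1 := by linarith
    have hQ1 : (1:ℝ) ≤ x^θ+1 := by nlinarith
    set Lx := Real.log x with hLx
    set Lq := Real.log (x^θ+1) with hLq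
    set P := (x^θ+1)^(-(α/θ)-1) with hPdef
    set Pw := (x^θ+1)^(-(α/θ)-2) with hPwdef
    have hLx0 : 0 ≤ Lx := Real.log_nonneg hx1
    have hLq0 : 0 ≤ Lq := Real.log_nonneg hQ1
    have hP : 0 ≤ P := Real.rpow_nonneg hQ.le _
    have hPw : 0 ≤ Pw := Real.rpow_nonneg hQ.le _
    have E1 : P = Pw * (x^θ+1) := by
      rw [hPdef, hPwdef, ← Real.rpow_add_one hQ.ne']; congr 1; ring
    have f1 : θ * Lx ≤ Lq := by
      have : Real.log (x^θ) ≤ Lq := (Real.log_le_log_iff hX hQ).mpr (by linarith)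
      rwa [Real.log_rpow hx0] at this
    have hxP : x^θ * Pw ≤ P := by
      have h' : x^θ * Pw ≤ (x^θ+1) * Pw :=
        mul_le_mul_of_nonneg_right (by linarith) hPw
      rw [E1]; linarith
    have f2 : θ * (x^θ * Lx * Pw) ≤ Lq * P := by
      have h := mul_le_mul f1 hxP (by positivity) hLq0
      calc θ * (x^θ * Lx * Pw) = (θ*Lx) * (x^θ * Pw) := by ring
        _ ≤ Lq * P := h
    have g1 : (1/(α/θ+1)) * ((θ*Lx) * P) ≤ (1/(α/θ+1)) * (Lq * P) :=
      mul_le_mul_of_nonneg_left (mul_le_mul_of_nonneg_right f1 hP) (by positivity)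
    have h0 : 0 ≤ (1/(α/θ+1)) * ((θ*Lx) * P) := by positivity
    have hN : 0 ≤ θ * (x^θ * Lx * Pw) := by positivity
    have hM1 : 0 ≤ (α/θ)/(α/θ+1) * (Lq * P) := by positivity
    have hM2 : 0 ≤ (1/(α/θ+1)) * (Lq*P) := by positivity
    have hP1 : 0 ≤ (1/(α/θ+1)) * P := by positivity
    have hP2 : 0 ≤ ((α/θ)/(α/θ+1)^2) * P := by positivity
    have hLqP : 0 ≤ Lq * P := mul_nonneg hLq0 hP
    have hbr : |P * ((-θ*Lx/(α/θ+1) + 1/(α/θ+1) - (α/θ)/(α/θ+1)^2)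
          - (α/θ)/(α/θ+1) * Lq) + θ * (x^θ*Lx*Pw)|
        ≤ (1/(α/θ+1) + (α/θ)/(α/θ+1) + 1) * (Lq * P)
          + (1/(α/θ+1) + (α/θ)/(α/θ+1)^2) * P := by
      have hA : (0:ℝ) ≤ 1/(α/θ+1) := by positivity
      have hbr' := absbr (A := 1/(α/θ+1)) (B := (α/θ)/(α/θ+1)) (C := (α/θ)/(α/θ+1)^2)
        (θ := θ) (Lx := Lx) (Lq := Lq) (P := P) (N := x^θ*Lx*Pw)
        f2 hLqP hN g1 h0 hM1 hP1 hP2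
      calc |P * ((-θ*Lx/(α/θ+1) + 1/(α/θ+1) - (α/θ)/(α/θ+1)^2)
          - (α/θ)/(α/θ+1) * Lq) + θ * (x^θ*Lx*Pw)|
          = |P * ((-θ*Lx*(1/(α/θ+1)) + 1/(α/θ+1) - (α/θ)/(α/θ+1)^2)
            - ((α/θ)/(α/θ+1))*Lq) + θ*(x^θ*Lx*Pw)| := by rw [show
              P * ((-θ*Lx/(α/θ+1) + 1/(α/θ+1) - (α/θ)/(α/θ+1)^2)
                - (α/θ)/(α/θ+1) * Lq) + θ * (x^θ*Lx*Pw)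
              = P * ((-θ*Lx*(1/(α/θ+1)) + 1/(α/θ+1) - (α/θ)/(α/θ+1)^2)
                - ((α/θ)/(α/θ+1))*Lq) + θ*(x^θ*Lx*Pw) by ring]
        _ ≤ (1/(α/θ+1) + (α/θ)/(α/θ+1) + 1)*(Lq*P) + (1/(α/θ+1) + (α/θ)/(α/θ+1)^2)*P := hbr'
    have hc0 : (0:ℝ) ≤ α*(α+θ)*2^(α/θ) * x^(θ-1)/θ^2 := by positivity
    calc ‖-( (α*(α+θ)*2^(α/θ) * x^(θ-1)/θ^2) *
        (P * ((-θ*Lx/(α/θ+1) + 1/(α/θ+1) - (α/θ)/(α/θ+1)^2)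
              - (α/θ)/(α/θ+1) * Lq)
          + θ * (x^θ*Lx*Pw)))‖
        = (α*(α+θ)*2^(α/θ) * x^(θ-1)/θ^2) *
          |P * ((-θ*Lx/(α/θ+1) + 1/(α/θ+1) - (α/θ)/(α/θ+1)^2)
              - (α/θ)/(α/θ+1) * Lq) + θ * (x^θ*Lx*Pw)| := by
          rw [norm_neg, Real.norm_eq_abs, abs_mul, abs_of_nonneg hc0]
      _ ≤ (α*(α+θ)*2^(α/θ) * x^(θ-1)/θ^2) *
          ((1/(α/θ+1) + (α/θ)/(α/θ+1) + 1) * (Lq * P)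
            + (1/(α/θ+1) + (α/θ)/(α/θ+1)^2) * P) :=
          mul_le_mul_of_nonneg_left hbr hc0
      _ = (α*(α+θ)*2^(α/θ)/θ^2) *
          ((1/(α/θ+1) + (α/θ)/(α/θ+1) + 1) * (x^(θ-1)*(Real.log (1+x^θ)*(1+x^θ)^(-(α/θ)-1)))
            + (1/(α/θ+1) + (α/θ)/(α/θ+1)^2) * (x^(θ-1)*(1+x^θ)^(-(α/θ)-1))) := by
          rw [show (1:ℝ)+x^θ = x^θ+1 from add_comm _ _, hPdef, hLq]
          ring

lemma inner_eval (α θ : ℝ) (hα : 0 < α) (hθ : 0 < θ) {x : ℝ} (hx : 1 ≤ x) :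
    ∫ y in Ici (1:ℝ),
      ((Real.log x + Real.log y + (α/θ^2) * Real.log (x^θ+y^θ) -
        (2+α/θ) * ((x^θ*Real.log x + y^θ*Real.log y)/(x^θ+y^θ))) *
       (α*(α+θ)*2^(α/θ) * (x*y)^(θ-1) * (x^θ+y^θ)^(-α/θ-2)))
    = -( (α*(α+θ)*2^(α/θ) * x^(θ-1)/θ^2) *
        ((x^θ+1)^(-(α/θ)-1) *
            ((-θ*Real.log x/(α/θ+1) + 1/(α/θ+1) - (α/θ)/(α/θ+1)^2)
              - (α/θ)/(α/θ+1) * Real.log (x^θ+1))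
          + θ * (x^θ*Real.log x * (x^θ+1)^(-(α/θ)-2)))) := by
  have hx0 : (0:ℝ) < x := lt_of_lt_of_le one_pos hx
  rw [MeasureTheory.integral_Ici_eq_integral_Ioi]
  rw [integral_Ioi_of_hasDerivAt_of_tendsto
    (hasDerivAt_Gin α θ hα hθ hx0 one_pos).continuousAt.continuousWithinAt
    (fun y hy => hasDerivAt_Gin α θ hα hθ hx0 (lt_trans one_pos hy))
    (inner_integrable α θ hα hθ hx) (tendsto_Gin α θ hα hθ x hx0)]
  rw [zero_sub]
  congr 1
  rw [Real.one_rpow, Real.log_one]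
  ring

lemma outer_eval (α θ : ℝ) (hα : 0 < α) (hθ : 0 < θ) :
    ∫ x in Ici (1:ℝ),
      (-( (α*(α+θ)*2^(α/θ) * x^(θ-1)/θ^2) *
        ((x^θ+1)^(-(α/θ)-1) *
            ((-θ*Real.log x/(α/θ+1) + 1/(α/θ+1) - (α/θ)/(α/θ+1)^2)
              - (α/θ)/(α/θ+1) * Real.log (x^θ+1))
          + θ * (x^θ*Real.log x * (x^θ+1)^(-(α/θ)-2)))))
    = α * Real.log 2 / θ^2 - 1/(α+θ) := by
  rw [MeasureTheory.integral_Ici_eq_integral_Ioi]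
  rw [integral_Ioi_of_hasDerivAt_of_tendsto
    (hasDerivAt_Gout α θ hα hθ one_pos).continuousAt.continuousWithinAt
    (fun x hxx => hasDerivAt_Gout α θ hα hθ (lt_trans one_pos hxx))
    (outer_integrable α θ hα hθ) (tendsto_Gout α θ hα hθ)]
  rw [zero_sub, Real.one_rpow, Real.log_one]
  have hb : (0:ℝ) < α/θ := by positivity
  have hs : (0:ℝ) < (2:ℝ)^(-(α/θ)) := Real.rpow_pos_of_pos two_pos _
  have ht : (2:ℝ)^(α/θ) = 1/(2:ℝ)^(-(α/θ)) := by
    rw [eq_div_iff hs.ne', ← Real.rpow_add two_pos]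
    norm_num
  norm_num
  rw [ht]
  have hb1 : α/θ+1 ≠ 0 := by positivity
  have hba : α/θ ≠ 0 := ne_of_gt hb
  have hαθ : α+θ ≠ 0 := by positivity
  field_simp
  ring

end Stmt13

open MeasureTheory in
/-- Mean of the θ-score function under the joint jump density (ε = 1):
`E[T(X,Y)] = α log 2/θ² - 1/(α+θ)`. -/
theorem stmt_13 (α θ : ℝ) (hα : 0 < α) (hθ : 0 < θ)
    (T f : ℝ → ℝ → ℝ)
    (hT : ∀ x y : ℝ, T x y =
      Real.log x + Real.log y + (α / θ ^ 2) * Real.log (x ^ θ + y ^ θ) -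
        (2 + α/θ) * ((x ^ θ * Real.log x + y ^ θ * Real.log y) / (x ^ θ + y ^ θ)))
    (hf : ∀ x y : ℝ, f x y = α * (α + θ) * 2 ^ (α/θ) *
      (x * y) ^ (θ - 1) * (x ^ θ + y ^ θ) ^ (-α/θ - 2))
    (hf1 : (∫ x in Set.Ici (1:ℝ), ∫ y in Set.Ici (1:ℝ), f x y) = 1) :
    (∫ x in Set.Ici (1:ℝ), ∫ y in Set.Ici (1:ℝ), T x y * f x y) =
      α * Real.log 2 / θ ^ 2 - 1 / (α + θ) := by
  have step1 : EqOn (fun x : ℝ => ∫ y in Set.Ici (1:ℝ), T x y * f x y)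
      (fun x : ℝ => -( (α*(α+θ)*2^(α/θ) * x^(θ-1)/θ^2) *
        ((x^θ+1)^(-(α/θ)-1) *
            ((-θ*Real.log x/(α/θ+1) + 1/(α/θ+1) - (α/θ)/(α/θ+1)^2)
              - (α/θ)/(α/θ+1) * Real.log (x^θ+1))
          + θ * (x^θ*Real.log x * (x^θ+1)^(-(α/θ)-2))))) (Ici 1) := by
    intro x hx
    have e1 : EqOn (fun y : ℝ => T x y * f x y) (fun y : ℝ =>
      ((Real.log x + Real.log y + (α/θ^2) * Real.log (x^θ+y^θ) -
        (2+α/θ) * ((x^θ*Real.log x + y^θ*Real.log y)/(x^θ+y^θ))) *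
       (α*(α+θ)*2^(α/θ) * (x*y)^(θ-1) * (x^θ+y^θ)^(-α/θ-2)))) (Ici 1) := by
      intro y _
      simp only [hT, hf]
    simp only
    rw [MeasureTheory.setIntegral_congr_fun measurableSet_Ici e1,
      Stmt13.inner_eval α θ hα hθ hx]
  rw [MeasureTheory.setIntegral_congr_fun measurableSet_Ici step1]
  exact Stmt13.outer_eval α θ hα hθ
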